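/- Let J be a finite index set, let {π^i_j : B_i → B_{ij} = B_{ji}}_{i ≠ j ∈ J} be a family of homomorphisms of unital algebras with multi-pullback B^π, and let π_i : B^π → B_i denote the restriction of the i-th canonical projection. Assume that every π_i is surjective and that the kernels {ker π_i : i ∈ J} generate a distributive sublattice of the lattice of two-sided ideals of B^π. Then the map b ↦ (b + ker π_i)_{i ∈ J} is an algebra isomorphism from B^π onto the multi-pullback of the family of canonical surjections B^π/ker π_i → B^π/(ker π_i + ker π_j) (for i ≠ j ∈ J). -/

import Mathlib

set_option synthInstance.maxHeartbeats 1000000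
set_option maxHeartbeats 1000000
/-!
**Statement 3** (Lemma 1.2 of the paper).

A family of homomorphisms of unital `k`-algebras `π^i_j : B_i → B_{ij} = B_{ji}`
(`i ≠ j ∈ J`, `J` finite) is encoded as follows: for each ordered pair `(i,j)` we
have an algebra `C i j` (playing the role of `B_{ij}`) together with the two maps
`π i j : B i →ₐ[k] C i j` (playing `π^i_j`) and `ρ i j : B j →ₐ[k] C i j`
(playing `π^j_i`, viewed in `B_{ij}`); the identification `B_{ij} = B_{ji}` is
expressed by the hypothesis `hsym`, saying that the gluing constraint determined by
`(i,j)` coincides with the one determined by `(j,i)`.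
-/

/-- Membership in the sublattice generated by a set `S` in a lattice. -/
inductive InSublattice {α : Type*} [Lattice α] (S : Set α) : α → Prop
  | base {x : α} : x ∈ S → InSublattice S x
  | inf {x y : α} : InSublattice S x → InSublattice S y → InSublattice S (x ⊓ y)
  | sup {x y : α} : InSublattice S x → InSublattice S y → InSublattice S (x ⊔ y)

/-- The canonical factor map between quotients by nested two-sided ideals. -/
def quotFactorHom {B : Type*} [Ring B] {I J : TwoSidedIdeal B} (h : I ≤ J) :
    I.ringCon.Quotient →+* J.ringCon.Quotient where
  toFun := Quotient.map' id (fun _ _ hab => TwoSidedIdeal.ringCon_le_iff.mp h hab)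
  map_one' := rfl
  map_mul' := by rintro ⟨x⟩ ⟨y⟩; rfl
  map_zero' := rfl
  map_add' := by rintro ⟨x⟩ ⟨y⟩; rfl

/-- The canonical factor map between quotients by nested two-sided ideals, as an
algebra homomorphism. -/
def quotFactorAlg (k : Type*) [CommRing k] {B : Type*} [Ring B] [Algebra k B]
    {I J : TwoSidedIdeal B} (h : I ≤ J) :
    I.ringCon.Quotient →ₐ[k] J.ringCon.Quotient :=
  { quotFactorHom h with commutes' := fun _ => rfl }

variable (k : Type*) [CommRing k] {J : Type*} (B : J → Type*)
  [∀ i, Ring (B i)] [∀ i, Algebra k (B i)]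
  (C : J → J → Type*) [∀ i j, Ring (C i j)] [∀ i j, Algebra k (C i j)]
  (π : ∀ i j, B i →ₐ[k] C i j) (ρ : ∀ i j, B j →ₐ[k] C i j)

/-- The multi-pullback `B^π` of the family, as a subalgebra of `∏_{i ∈ J} B_i`. -/
def multiPullback : Subalgebra k (∀ i, B i) where
  carrier := {b | ∀ i j, i ≠ j → π i j (b i) = ρ i j (b j)}
  mul_mem' := by
    intro x y hx hy i j hij
    simp only [Pi.mul_apply, map_mul, hx i j hij, hy i j hij]
  one_mem' := by
    intro i j hij
    simp only [Pi.one_apply, map_one]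
  add_mem' := by
    intro x y hx hy i j hij
    simp only [Pi.add_apply, map_add, hx i j hij, hy i j hij]
  zero_mem' := by
    intro i j hij
    simp only [Pi.zero_apply, map_zero]
  algebraMap_mem' := by
    intro r i j hij
    simp only [Pi.algebraMap_apply, AlgHom.commutes]

/-- The restriction `π_i : B^π → B_i` of the `i`-th canonical projection. -/
def multiPullbackProj (i : J) : multiPullback k B C π ρ →ₐ[k] B i :=
  (Pi.evalAlgHom k B i).comp (multiPullback k B C π ρ).val

/-- The kernel `ker π_i`, a two-sided ideal of `B^π`. -/
def projKer (i : J) : TwoSidedIdeal (multiPullback k B C π ρ) :=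
  TwoSidedIdeal.ker (multiPullbackProj k B C π ρ i)

/-- The multi-pullback of the family of canonical surjections
`B^π/ker π_i → B^π/(ker π_i + ker π_j)`, as a subalgebra of
`∏_{i ∈ J} B^π/ker π_i`. -/
def canonicalMultiPullback :
    Subalgebra k (∀ i, (projKer k B C π ρ i).ringCon.Quotient) where
  carrier := {q | ∀ i j, i ≠ j →
    quotFactorAlg k (le_sup_left : projKer k B C π ρ i ≤
        projKer k B C π ρ i ⊔ projKer k B C π ρ j) (q i) =
    quotFactorAlg k (le_sup_right : projKer k B C π ρ j ≤
        projKer k B C π ρ i ⊔ projKer k B C π ρ j) (q j)}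
  mul_mem' := by
    intro x y hx hy i j hij
    simp only [Pi.mul_apply, map_mul, hx i j hij, hy i j hij]
  one_mem' := by
    intro i j hij
    simp only [Pi.one_apply, map_one]
  add_mem' := by
    intro x y hx hy i j hij
    simp only [Pi.add_apply, map_add, hx i j hij, hy i j hij]
  zero_mem' := by
    intro i j hij
    simp only [Pi.zero_apply, map_zero]
  algebraMap_mem' := by
    intro r i j hij
    simp only [Pi.algebraMap_apply, AlgHom.commutes]

section Aux

/-- Distributive identity `(X ⊔ K) ⊓ (Y ⊔ K) = (X ⊓ Y) ⊔ K` for members of a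
distributive sublattice. -/
lemma aux_sup_inf_sup {α : Type*} [Lattice α] (S : Set α)
    (hdist : ∀ K L M : α, InSublattice S K → InSublattice S L → InSublattice S M →
      K ⊓ (L ⊔ M) = (K ⊓ L) ⊔ (K ⊓ M))
    {X Y K : α} (hX : InSublattice S X) (hY : InSublattice S Y)
    (hK : InSublattice S K) :
    (X ⊔ K) ⊓ (Y ⊔ K) = (X ⊓ Y) ⊔ K := by
  have h1 : (X ⊔ K) ⊓ (Y ⊔ K) = ((X ⊔ K) ⊓ Y) ⊔ ((X ⊔ K) ⊓ K) :=
    hdist _ _ _ (hX.sup hK) hY hK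
  have h2 : (X ⊔ K) ⊓ K = K := inf_eq_right.mpr le_sup_right
  have h3 : (X ⊔ K) ⊓ Y = Y ⊓ (X ⊔ K) := inf_comm _ _
  have h4 : Y ⊓ (X ⊔ K) = (Y ⊓ X) ⊔ (Y ⊓ K) := hdist _ _ _ hY hX hK
  rw [h1, h2, h3, h4, inf_comm Y X, sup_assoc]
  congr 1
  exact sup_eq_right.mpr inf_le_right

/-- A nonempty finite inf of sublattice members lies in the sublattice. -/
lemma aux_inf_mem {α : Type*} [Lattice α] [OrderTop α] (S : Set α) {ι : Type*}
    {f : ι → α} (hf : ∀ i, InSublattice S (f i)) {s : Finset ι} (hs : s.Nonempty) :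
    InSublattice S (s.inf f) := by
  induction hs using Finset.Nonempty.cons_induction with
  | singleton a => simpa using hf a
  | cons a s ha hs ih =>
      rw [Finset.inf_cons]
      exact (hf a).inf ih

/-- Key lattice computation: `⨅_{i ∈ s} (f i ⊔ K) ≤ (⨅_{i ∈ s} f i) ⊔ K`. -/
lemma aux_inf_sup_le {α : Type*} [Lattice α] [OrderTop α] (S : Set α)
    (hdist : ∀ K L M : α, InSublattice S K → InSublattice S L → InSublattice S M →
      K ⊓ (L ⊔ M) = (K ⊓ L) ⊔ (K ⊓ M))
    {ι : Type*} {f : ι → α} (hf : ∀ i, InSublattice S (f i)) {K : α}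
    (hK : InSublattice S K) {s : Finset ι} (hs : s.Nonempty) :
    (s.inf fun i => f i ⊔ K) ≤ s.inf f ⊔ K := by
  induction hs using Finset.Nonempty.cons_induction with
  | singleton a => simp
  | cons a s ha hs ih =>
      rw [Finset.inf_cons, Finset.inf_cons]
      calc (f a ⊔ K) ⊓ (s.inf fun i => f i ⊔ K)
          ≤ (f a ⊔ K) ⊓ (s.inf f ⊔ K) := inf_le_inf_left _ ih
        _ = (f a ⊓ s.inf f) ⊔ K :=
            aux_sup_inf_sup S hdist (hf a) (aux_inf_mem S hf hs) hK

/-- Membership in a finite inf of two-sided ideals. -/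
lemma aux_mem_finset_inf {R : Type*} [Ring R] {ι : Type*} {f : ι → TwoSidedIdeal R}
    {s : Finset ι} {x : R} : x ∈ s.inf f ↔ ∀ i ∈ s, x ∈ f i := by
  classical
  induction s using Finset.induction with
  | empty => simp [TwoSidedIdeal.mem_top]
  | insert _ _ ha ih =>
      rw [Finset.inf_insert]
      simp [TwoSidedIdeal.mem_inf, ih]

end Aux

/-- **Lemma 1.2**: if the restrictions `π_i` of the canonical projections to the
multi-pullback `B^π` are surjective and their kernels generate a distributive lattice
of two-sided ideals of `B^π`, then `b ↦ (b + ker π_i)_{i ∈ J}` is an algebra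
isomorphism from `B^π` onto the multi-pullback of the canonical surjections
`B^π/ker π_i → B^π/(ker π_i + ker π_j)`. -/
theorem multiPullback_iso_canonicalMultiPullback
    [Finite J]
    -- `B_{ij} = B_{ji}`: the constraints of `(i,j)` and `(j,i)` coincide:
    (hsym : ∀ i j, i ≠ j → ∀ (x : B i) (y : B j),
      π i j x = ρ i j y ↔ π j i y = ρ j i x)
    -- every `π_i` is surjective:
    (hsurj : ∀ i, Function.Surjective (multiPullbackProj k B C π ρ i))
    -- the kernels `ker π_i` generate a distributive lattice of two-sided ideals:
    (hdist : ∀ K L M : TwoSidedIdeal (multiPullback k B C π ρ),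
      InSublattice {I | ∃ i, I = projKer k B C π ρ i} K →
      InSublattice {I | ∃ i, I = projKer k B C π ρ i} L →
      InSublattice {I | ∃ i, I = projKer k B C π ρ i} M →
      K ⊓ (L ⊔ M) = (K ⊓ L) ⊔ (K ⊓ M)) :
    ∃ e : multiPullback k B C π ρ ≃ₐ[k] canonicalMultiPullback k B C π ρ,
      ∀ (b : multiPullback k B C π ρ) (i : J),
        (e b : ∀ i, (projKer k B C π ρ i).ringCon.Quotient) i =
          (projKer k B C π ρ i).ringCon.mk' b := by
  classical
  have : Fintype J := Fintype.ofFinite J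
  let A := multiPullback k B C π ρ
  let K : J → TwoSidedIdeal A := projKer k B C π ρ
  let S : Set (TwoSidedIdeal A) := {I | ∃ i, I = projKer k B C π ρ i}
  -- the canonical algebra homomorphism
  let e0 : A →ₐ[k] canonicalMultiPullback k B C π ρ :=
  { toFun := fun b => ⟨fun i => (K i).ringCon.mk' b, fun i j hij => rfl⟩
    map_one' := Subtype.ext <| funext fun i => map_one ((K i).ringCon.mk')
    map_mul' := fun x y => Subtype.ext <| funext fun i => map_mul ((K i).ringCon.mk') x y
    map_zero' := Subtype.ext <| funext fun i => map_zero ((K i).ringCon.mk')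
    map_add' := fun x y => Subtype.ext <| funext fun i => map_add ((K i).ringCon.mk') x y
    commutes' := fun r => Subtype.ext <| funext fun i => rfl }
  -- injectivity
  have hinj : Function.Injective e0 := by
    intro x y hxy
    have h : ∀ i, (K i).ringCon.mk' x = (K i).ringCon.mk' y :=
      fun i => congrFun (congrArg Subtype.val hxy) i
    have hxyi : ∀ i, (x : ∀ i, B i) i = (y : ∀ i, B i) i := by
      intro i
      have h1 : (K i).ringCon x y := Quotient.eq''.mp (h i)
      have h2 : x - y ∈ K i := (TwoSidedIdeal.rel_iff _ _ _).mp h1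
      have h3 : multiPullbackProj k B C π ρ i (x - y) = 0 :=
        (TwoSidedIdeal.mem_ker _).mp h2
      have h4 : (x : ∀ i, B i) i - (y : ∀ i, B i) i = 0 := h3
      exact sub_eq_zero.mp h4
    exact Subtype.ext (funext hxyi)
  -- surjectivity
  have hsurjE : Function.Surjective e0 := by
    rintro ⟨q, hq⟩
    choose b hb using fun i => Quotient.mk''_surjective (q i)
    have hcomp : ∀ i j, i ≠ j → b i - b j ∈ K i ⊔ K j := by
      intro i j hij
      have h1 := hq i j hij
      rw [← hb i, ← hb j] at h1
      have h2 : (K i ⊔ K j).ringCon (b i) (b j) := Quotient.eq''.mp h1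
      exact (TwoSidedIdeal.rel_iff _ _ _).mp h2
    have key : ∀ s : Finset J, ∃ a : A, ∀ i ∈ s, a - b i ∈ K i := by
      intro s
      induction s using Finset.induction with
      | empty => exact ⟨0, by simp⟩
      | @insert j s hj ih =>
          obtain ⟨a, ha⟩ := ih
          rcases s.eq_empty_or_nonempty with rfl | hs
          · refine ⟨b j, fun i hi => ?_⟩
            rcases Finset.mem_insert.mp hi with rfl | hi
            · rw [sub_self]; exact TwoSidedIdeal.zero_mem _
            · exact absurd hi (Finset.notMem_empty i)
          · have hmem : b j - a ∈ s.inf K ⊔ K j := by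
              have h1 : b j - a ∈ s.inf fun i => K i ⊔ K j := by
                rw [aux_mem_finset_inf]
                intro i hi
                have hij : i ≠ j := fun h => hj (h ▸ hi)
                have e1 : b j - b i ∈ K i ⊔ K j := by
                  have h2 := hcomp j i hij.symm
                  rwa [sup_comm] at h2
                have e2 : a - b i ∈ K i := ha i hi
                have h3 : b j - a = (b j - b i) - (a - b i) := by abel
                rw [h3]
                exact TwoSidedIdeal.sub_mem _ e1 (TwoSidedIdeal.mem_sup_left e2)
              exact aux_inf_sup_le S hdist (fun i => InSublattice.base ⟨i, rfl⟩)
                (InSublattice.base ⟨j, rfl⟩) hs h1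
            obtain ⟨y, hy, z, hz, hyz⟩ := TwoSidedIdeal.mem_sup.mp hmem
            refine ⟨a + y, fun i hi => ?_⟩
            rcases Finset.mem_insert.mp hi with rfl | hi
            · have h3 : a + y - b i = -z := by
                rw [← sub_sub_cancel (b i) a, ← hyz]; abel
              rw [h3]; exact TwoSidedIdeal.neg_mem _ hz
            · have h3 : a + y - b i = (a - b i) + y := by abel
              rw [h3]
              exact TwoSidedIdeal.add_mem _ (ha i hi) (aux_mem_finset_inf.mp hy i hi)
    obtain ⟨a, ha⟩ := key Finset.univ
    refine ⟨a, Subtype.ext (funext fun i => ?_)⟩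
    show (K i).ringCon.mk' a = q i
    rw [← hb i]
    exact Quotient.eq''.mpr
      ((TwoSidedIdeal.rel_iff _ _ _).mpr (ha i (Finset.mem_univ i)))
  exact ⟨AlgEquiv.ofBijective e0 ⟨hinj, hsurjE⟩, fun b i => rfl⟩
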